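/- Let V be a real Banach space, A : V → V* strongly monotone with constant m_A, M : V → X a bounded linear operator into a Hilbert space X, and suppose the multivalued term satisfies a growth bound ‖∂j(Mu, Mu)‖_X ≤ d₁ + (d₂+d₃)‖Mu‖_X with (d₂+d₃)‖M‖² < m_A. If u satisfies ⟨Au - f, -u⟩ + ⟨w, -Mu⟩_X + φ(0) - φ(u) ≥ 0 with ‖w‖_X ≤ d₁ + (d₂+d₃)‖Mu‖_X, φ(0)=0, φ ≥ -c_φ‖u‖ (Lipschitz), then ‖u‖ ≤ (‖f - A0‖ + c_φ + d₁‖M‖)/(m_A - (d₂+d₃)‖M‖²). -/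

import Mathlib

/-- A priori bound for the auxiliary inequality with multivalued term:
    ‖u‖ ≤ (‖f - A0‖ + c_φ + d₁‖M‖)/(m_A - (d₂+d₃)‖M‖²). -/
theorem auxiliary_inequality_bound
    {V X : Type*} [NormedAddCommGroup V] [NormedSpace ℝ V] [CompleteSpace V]
    [NormedAddCommGroup X] [InnerProductSpace ℝ X]
    (A : V → (V →L[ℝ] ℝ)) (mA : ℝ) (hmA : 0 < mA)
    (hmono : ∀ v₁ v₂ : V, mA * ‖v₁ - v₂‖ ^ 2 ≤ (A v₁ - A v₂) (v₁ - v₂))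
    (M : V →L[ℝ] X)
    (d₁ d₂ d₃ : ℝ) (hd₁ : 0 ≤ d₁) (hd₂ : 0 ≤ d₂) (hd₃ : 0 ≤ d₃)
    (hsmall : (d₂ + d₃) * ‖M‖ ^ 2 < mA)
    (φ : V → ℝ) (cφ : ℝ) (hcφ : 0 ≤ cφ)
    (hφ : ∀ v₁ v₂ : V, φ v₁ - φ v₂ ≤ cφ * ‖v₁ - v₂‖) (hφ0 : φ 0 = 0)
    (f : V →L[ℝ] ℝ) (u : V) (w : X)
    (hwbound : ‖w‖ ≤ d₁ + (d₂ + d₃) * ‖M u‖)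
    (hineq : 0 ≤ (A u - f) (-u) + inner ℝ w (-(M u)) + φ 0 - φ u) :
    ‖u‖ ≤ (‖f - A 0‖ + cφ + d₁ * ‖M‖) / (mA - (d₂ + d₃) * ‖M‖ ^ 2) := by
  set s := (d₂ + d₃) * ‖M‖ ^ 2 with hs
  have hnu : (0:ℝ) ≤ ‖u‖ := norm_nonneg u
  have hMu : ‖M u‖ ≤ ‖M‖ * ‖u‖ := M.le_opNorm u
  have hMn : (0:ℝ) ≤ ‖M‖ := norm_nonneg M
  have hwn : (0:ℝ) ≤ ‖w‖ := norm_nonneg w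
  -- basic rewrites in hineq
  have h1 : (A u - f) u + inner ℝ w (M u) + φ u ≤ 0 := by
    have := hineq
    simp only [hφ0, map_neg, inner_neg_right] at this
    linarith
  -- strong monotonicity at 0
  have h2 : mA * ‖u‖ ^ 2 ≤ (A u - A 0) u := by
    have := hmono u 0
    simpa using this
  have h3 : (A u - A 0) u = (A u - f) u + (f - A 0) u := by
    simp [ContinuousLinearMap.sub_apply]
  have h4 : (f - A 0) u ≤ ‖f - A 0‖ * ‖u‖ := le_trans (le_abs_self _) (by simpa using (f - A 0).le_opNorm u)
  have h5 : -(‖w‖ * ‖M u‖) ≤ inner ℝ w (M u) := by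
    have := abs_real_inner_le_norm w (M u)
    cases abs_le.mp this with
    | intro h _ => linarith
  have h6 : -(cφ * ‖u‖) ≤ φ u := by
    have := hφ 0 u
    simp [hφ0] at this
    linarith
  have h7 : ‖w‖ * ‖M u‖ ≤ d₁ * (‖M‖ * ‖u‖) + (d₂ + d₃) * (‖M‖ * ‖u‖) ^ 2 := by
    have hMu0 : (0:ℝ) ≤ ‖M u‖ := norm_nonneg _
    have : ‖w‖ * ‖M u‖ ≤ (d₁ + (d₂ + d₃) * ‖M u‖) * ‖M u‖ :=
      mul_le_mul_of_nonneg_right hwbound hMu0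
    nlinarith [mul_le_mul hMu hMu hMu0 (by positivity : (0:ℝ) ≤ ‖M‖ * ‖u‖)]
  have key : (mA - s) * ‖u‖ ^ 2 ≤ (‖f - A 0‖ + cφ + d₁ * ‖M‖) * ‖u‖ := by
    rw [hs]; nlinarith
  have heps : 0 < mA - s := by linarith
  rw [le_div_iff₀ heps]
  rcases eq_or_lt_of_le hnu with h0 | h0
  · rw [← h0]; simp; positivity
  · nlinarith
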